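/- arXiv:2009.14583 — 4 statements merged into one kernel-verified Lean document; each statement's English description precedes it below -/
import Mathlib

section
/- For every real α > 0 and every integer k ≥ 1, there exists n₀ such that for all n ≥ n₀ the following holds: if G is a graph on n vertices with minimum degree δ(G) ≥ αn, then there exists a partition V(G) = U₁ ∪ U₂ ∪ ... ∪ U_k such that (1) every part U_i has size ⌊n/k⌋ or ⌈n/k⌉, and (2) every vertex v ∈ V(G) has at least (α/2)·|U_i| neighbors in U_i, for every i ∈ [k]. -/
open Finset Filter


lemma factor_sum {V : Type} [Fintype V] [DecidableEq V] {k : ℕ} (N : Finset V) (i : Fin k)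
    (b : ℝ) :
    ∑ f : V → Fin k, b ^ (N.filter (fun u => f u = i)).card
      = (b + (k - 1)) ^ N.card * (k : ℝ) ^ (Fintype.card V - N.card) := by
  have h1 : ∀ f : V → Fin k, b ^ (N.filter (fun u => f u = i)).card
      = ∏ u : V, (if u ∈ N then (if f u = i then b else 1) else 1) := by
    intro f
    rw [Finset.prod_ite_mem Finset.univ N (fun u => if f u = i then b else (1:ℝ))]
    simp only [Finset.univ_inter]
    rw [Finset.prod_ite (fun _ => b) (fun _ => (1:ℝ))]
    simp [Finset.prod_const]
  simp only [h1]
  have h2 : ∀ u : V, ∑ x : Fin k, (if u ∈ N then (if x = i then b else 1) else 1)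
      = if u ∈ N then b + (k - 1) else k := by
    intro u
    by_cases hu : u ∈ N
    · simp only [hu, if_true]
      have : ∀ x : Fin k, (if x = i then b else (1:ℝ)) = (if x = i then b - 1 else 0) + 1 := by
        intro x; by_cases hx : x = i <;> simp [hx]
      simp only [this, Finset.sum_add_distrib, Finset.sum_ite_eq', Finset.mem_univ, if_true,
        Finset.sum_const, Finset.card_univ, Fintype.card_fin, nsmul_eq_mul, mul_one]
      ring
    · simp [hu, Finset.card_univ]
  rw [← Fintype.prod_sum (fun u (x : Fin k) => (if u ∈ N then (if x = i then b else 1) else 1))]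
  rw [Finset.prod_congr rfl (fun u _ => h2 u)]
  rw [Finset.prod_ite (fun _ => b + ((k:ℝ)-1)) (fun _ => (k:ℝ))]
  rw [Finset.prod_const, Finset.prod_const, Finset.filter_univ_mem]
  congr 2
  rw [Finset.filter_not, Finset.filter_univ_mem, Finset.card_sdiff_of_subset (Finset.subset_univ N),
    Finset.card_univ]

lemma markov_tail {V : Type} [Fintype V] [DecidableEq V] {k : ℕ} (N : Finset V) (i : Fin k)
    {b c : ℝ} (hb : 0 < b) (S : Finset (V → Fin k))
    (hS : ∀ f ∈ S, c ≤ b ^ ((N.filter (fun u => f u = i)).card)) :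
    (S.card : ℝ) * c ≤ (b + (k - 1)) ^ N.card * (k : ℝ) ^ (Fintype.card V - N.card) := by
  calc (S.card : ℝ) * c = ∑ _f ∈ S, c := by rw [Finset.sum_const, nsmul_eq_mul]
  _ ≤ ∑ f ∈ S, b ^ ((N.filter (fun u => f u = i)).card) := Finset.sum_le_sum hS
  _ ≤ ∑ f : V → Fin k, b ^ ((N.filter (fun u => f u = i)).card) := by
      apply Finset.sum_le_sum_of_subset_of_nonneg (Finset.subset_univ S)
      intro f _ _; positivity
  _ = _ := factor_sum N i b

lemma repair_aux {V : Type} [Fintype V] [DecidableEq V] {k : ℕ} (t : Fin k → ℕ)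
    (ht : ∑ i, t i = Fintype.card V) :
    ∀ (m : ℕ) (f : V → Fin k),
      (∑ i, ((univ.filter (fun v => f v = i)).card - t i)) = m →
      ∃ g : V → Fin k, (∀ i, (univ.filter (fun v => g v = i)).card = t i) ∧
        (univ.filter (fun v => ¬ f v = g v)).card ≤ m := by
  intro m
  induction m with
  | zero =>
    intro f hf
    have hsum : ∑ i, (univ.filter (fun v => f v = i)).card = Fintype.card V := by
      rw [Finset.card_univ.symm, Finset.card_eq_sum_card_fiberwise (fun x _ => Finset.mem_univ (f x))]
    have hle : ∀ i ∈ univ, (univ.filter (fun v => f v = i)).card ≤ t i := by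
      intro i _
      have := Finset.sum_eq_zero_iff.mp hf i (Finset.mem_univ i)
      omega
    have heq : ∀ i ∈ univ, (univ.filter (fun v => f v = i)).card = t i := by
      rw [← Finset.sum_eq_sum_iff_of_le hle]
      rw [hsum, ht]
    refine ⟨f, fun i => heq i (Finset.mem_univ i), ?_⟩
    simp
  | succ m ih =>
    intro f hf
    set s : Fin k → ℕ := fun i => (univ.filter (fun v => f v = i)).card with hs
    have hsum : ∑ i, s i = Fintype.card V := by
      rw [Finset.card_univ.symm, Finset.card_eq_sum_card_fiberwise (fun x _ => Finset.mem_univ (f x))]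
    have hex : ∃ i₀, t i₀ < s i₀ := by
      by_contra h
      push_neg at h
      have h2 : ∑ i, (s i - t i) = 0 := Finset.sum_eq_zero (fun i _ => by have := h i; omega)
      have h3 : ∑ i, (s i - t i) = m + 1 := hf
      omega
    obtain ⟨i₀, hi₀⟩ := hex
    have hexj : ∃ j₀, s j₀ < t j₀ := by
      by_contra h
      push_neg at h
      have h2 : ∑ i, t i < ∑ i, s i :=
        Finset.sum_lt_sum (fun i _ => h i) ⟨i₀, Finset.mem_univ i₀, hi₀⟩
      omega
    obtain ⟨j₀, hj₀⟩ := hexj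
    have hne : i₀ ≠ j₀ := by intro h; rw [h] at hi₀; omega
    have hfib : (univ.filter (fun v => f v = i₀)).Nonempty := by
      rw [← Finset.card_pos]; change 0 < s i₀; omega
    obtain ⟨v, hv⟩ := hfib
    have hfv : f v = i₀ := (Finset.mem_filter.mp hv).2
    set f' : V → Fin k := Function.update f v j₀ with hf'
    have hupd : ∀ w, w ≠ v → f' w = f w := fun w hw => Function.update_of_ne hw _ _
    have hupdv : f' v = j₀ := Function.update_self _ _ _
    set s' : Fin k → ℕ := fun i => (univ.filter (fun w => f' w = i)).card with hs'
    have hsi0 : s' i₀ = s i₀ - 1 := by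
      show (univ.filter (fun w => f' w = i₀)).card = s i₀ - 1
      have : (univ.filter (fun w => f' w = i₀)) = (univ.filter (fun w => f w = i₀)).erase v := by
        ext w
        simp only [Finset.mem_filter, Finset.mem_univ, true_and, Finset.mem_erase]
        by_cases hw : w = v
        · subst hw; simp [hupdv, hne.symm, Ne.symm hne]
        · rw [hupd w hw]; tauto
      rw [this, Finset.card_erase_of_mem hv]
    have hsj0 : s' j₀ = s j₀ + 1 := by
      show (univ.filter (fun w => f' w = j₀)).card = s j₀ + 1
      have hvn : v ∉ (univ.filter (fun w => f w = j₀)) := by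
        simp only [Finset.mem_filter, Finset.mem_univ, true_and, hfv]
        exact hne
      have : (univ.filter (fun w => f' w = j₀)) = insert v (univ.filter (fun w => f w = j₀)) := by
        ext w
        simp only [Finset.mem_filter, Finset.mem_univ, true_and, Finset.mem_insert]
        by_cases hw : w = v
        · subst hw; simp [hupdv]
        · rw [hupd w hw]; tauto
      rw [this, Finset.card_insert_of_notMem hvn]
    have hsoth : ∀ i, i ≠ i₀ → i ≠ j₀ → s' i = s i := by
      intro i h1 h2
      show (univ.filter (fun w => f' w = i)).card = s i
      have : (univ.filter (fun w => f' w = i)) = (univ.filter (fun w => f w = i)) := by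
        ext w
        simp only [Finset.mem_filter, Finset.mem_univ, true_and]
        by_cases hw : w = v
        · subst hw; rw [hupdv, hfv]; constructor <;> intro h <;>
            [exact absurd h.symm h2; exact absurd h.symm h1]
        · rw [hupd w hw]
      rw [this]
    have hsum' : ∑ i, (s' i - t i) = m := by
      have e1 : ∀ (u : Fin k → ℕ), ∑ i, (u i - t i)
          = (u i₀ - t i₀) + ((u j₀ - t j₀) + ∑ i ∈ (univ.erase i₀).erase j₀, (u i - t i)) := by
        intro u
        rw [← Finset.add_sum_erase _ _ (Finset.mem_univ i₀)]
        congr 1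
        rw [← Finset.add_sum_erase _ _ (Finset.mem_erase.mpr ⟨Ne.symm hne, Finset.mem_univ j₀⟩)]
      have e2 : ∑ i ∈ (univ.erase i₀).erase j₀, (s' i - t i)
          = ∑ i ∈ (univ.erase i₀).erase j₀, (s i - t i) := by
        apply Finset.sum_congr rfl
        intro i hi
        simp only [Finset.mem_erase] at hi
        rw [hsoth i hi.2.1 hi.1]
      have hf2 : ∑ i, (s i - t i) = m + 1 := hf
      rw [e1 s, e2.symm] at hf2
      rw [e1 s', hsi0, hsj0]
      omega
    obtain ⟨g, hg1, hg2⟩ := ih f' hsum'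
    refine ⟨g, hg1, ?_⟩
    have hsub : (univ.filter (fun w => ¬ f w = g w))
        ⊆ (univ.filter (fun w => ¬ f w = f' w)) ∪ (univ.filter (fun w => ¬ f' w = g w)) := by
      intro w hw
      simp only [Finset.mem_filter, Finset.mem_univ, true_and, Finset.mem_union] at *
      by_cases h : f w = f' w
      · right; rw [← h]; exact hw
      · left; exact h
    have h1 : (univ.filter (fun w => ¬ f w = f' w)) = {v} := by
      ext w
      simp only [Finset.mem_filter, Finset.mem_univ, true_and, Finset.mem_singleton]
      by_cases hw : w = v
      · subst hw; simp [hupdv, hfv]; exact hne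
      · rw [hupd w hw]; simp [hw]
    calc (univ.filter (fun w => ¬ f w = g w)).card
        ≤ ((univ.filter (fun w => ¬ f w = f' w)) ∪ (univ.filter (fun w => ¬ f' w = g w))).card :=
          Finset.card_le_card hsub
      _ ≤ (univ.filter (fun w => ¬ f w = f' w)).card
          + (univ.filter (fun w => ¬ f' w = g w)).card := Finset.card_union_le _ _
      _ ≤ 1 + m := by rw [h1]; simp only [Finset.card_singleton]; omega
      _ = m + 1 := by omega

lemma chernoff {V : Type} [Fintype V] [DecidableEq V] {k : ℕ} (N : Finset V) (i : Fin k)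
    {b T : ℝ} (hb : 0 < b) (S : Finset (V → Fin k))
    (hS : ∀ f ∈ S, b ^ T ≤ b ^ (((N.filter (fun u => f u = i)).card : ℕ) : ℝ)) :
    (S.card : ℝ) ≤ b ^ (-T) * ((b + (k - 1)) ^ N.card * (k : ℝ) ^ (Fintype.card V - N.card)) := by
  have h := markov_tail N i (b := b) (c := b ^ T) hb S (fun f hf => by
    rw [← Real.rpow_natCast b]
    exact hS f hf)
  have hc : (0:ℝ) < b ^ T := Real.rpow_pos_of_pos hb T
  have h2 : b ^ (-T) * (b ^ T) = 1 := by
    rw [← Real.rpow_add hb]; simp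
  calc (S.card : ℝ) = b ^ (-T) * ((S.card : ℝ) * b ^ T) := by
        rw [mul_comm (S.card:ℝ), ← mul_assoc, h2, one_mul]
    _ ≤ _ :=
        mul_le_mul_of_nonneg_left h (le_of_lt (Real.rpow_pos_of_pos hb _))

lemma r1_lt_one {α K : ℝ} (hα : 0 < α) (hK : 1 ≤ K) :
    ((2:ℝ)⁻¹) ^ (-(5*α/(8*K))) * (1 - 1/(2*K)) ^ α < 1 := by
  have hK0 : (0:ℝ) < K := lt_of_lt_of_le one_pos hK
  have hβ : (0:ℝ) < 1 - 1/(2*K) := by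
    have : 1/(2*K) ≤ 1/2 := by
      apply div_le_div_of_nonneg_left one_pos.le (by norm_num) (by linarith)
    linarith
  have h1 : (0:ℝ) < ((2:ℝ)⁻¹) ^ (-(5*α/(8*K))) := Real.rpow_pos_of_pos (by norm_num) _
  have h2 : (0:ℝ) < (1 - 1/(2*K)) ^ α := Real.rpow_pos_of_pos hβ _
  rw [← Real.log_neg_iff (by positivity)]
  rw [Real.log_mul (ne_of_gt h1) (ne_of_gt h2), Real.log_rpow (by norm_num), Real.log_rpow hβ,
    Real.log_inv]
  have hlogβ : Real.log (1 - 1/(2*K)) ≤ -(1/(2*K)) := by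
    have := Real.log_le_sub_one_of_pos hβ
    linarith
  have hlog2 : Real.log 2 < 0.6931471808 := Real.log_two_lt_d9
  have hlog2' : (0:ℝ) < Real.log 2 := Real.log_pos (by norm_num)
  have hc : 0 < 5*α/(8*K) := by positivity
  have key : -(5*α/(8*K)) * -Real.log 2 + α * -(1/(2*K)) < 0 := by
    have : -(5*α/(8*K)) * -Real.log 2 = (5*α/(8*K)) * Real.log 2 := by ring
    rw [this]
    rw [div_mul_eq_mul_div, div_add' _ _ _ (by positivity : (8*K) ≠ 0)]
    apply div_neg_of_neg_of_pos _ (by positivity)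
    have : α * -(1 / (2 * K)) * (8*K) = -(4*α) := by field_simp; ring
    rw [this]
    nlinarith
  have hmono : α * Real.log (1 - 1/(2*K)) ≤ α * -(1/(2*K)) :=
    mul_le_mul_of_nonneg_left hlogβ hα.le
  nlinarith

lemma r2_lt_one {K θ ε : ℝ} (hK : 1 ≤ K) (hθ : 0 < θ) (hε : 0 < ε) (hθε : 2*θ ≤ ε*K) :
    (1 + θ) ^ (-(1/K + ε)) * (1 + θ/K) < 1 := by
  have hK0 : (0:ℝ) < K := lt_of_lt_of_le one_pos hK
  have h1θ : (0:ℝ) < 1 + θ := by linarith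
  have h1θK : (0:ℝ) < 1 + θ/K := by positivity
  have h1 : (0:ℝ) < (1 + θ) ^ (-(1/K + ε)) := Real.rpow_pos_of_pos h1θ _
  rw [← Real.log_neg_iff (by positivity)]
  rw [Real.log_mul (ne_of_gt h1) (ne_of_gt h1θK), Real.log_rpow h1θ]
  have hub : Real.log (1 + θ/K) ≤ θ/K := by
    have := Real.log_le_sub_one_of_pos h1θK; linarith
  have hlb : θ/(1+θ) ≤ Real.log (1 + θ) := by
    have h := Real.log_le_sub_one_of_pos (inv_pos.mpr h1θ)
    rw [Real.log_inv] at h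
    have : (1+θ)⁻¹ - 1 = -(θ/(1+θ)) := by field_simp; ring
    linarith
  have hcpos : (0:ℝ) < 1/K + ε := by positivity
  have hmono : -(1/K + ε) * Real.log (1 + θ) ≤ -(1/K + ε) * (θ/(1+θ)) := by
    rw [neg_mul, neg_mul, neg_le_neg_iff]
    exact mul_le_mul_of_nonneg_left hlb hcpos.le
  have key : θ/K < (1/K + ε) * (θ/(1+θ)) := by
    have e : (1/K + ε) * (θ/(1+θ)) - θ/K = θ*(ε*K - θ) / (K*(1+θ)) := by
      field_simp; ring
    have hp : (0:ℝ) < θ*(ε*K - θ) / (K*(1+θ)) := by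
      apply div_pos _ (by positivity)
      apply mul_pos hθ; linarith
    linarith
  linarith

lemma r3_lt_one {K θ ε : ℝ} (hK : 1 ≤ K) (hθ : 0 < θ) (hθ1 : θ ≤ 1) (hε : 0 < ε)
    (hθε : 2*θ ≤ ε*K) (hεK : ε ≤ 1/K) :
    ((1 + θ)⁻¹) ^ (-(1/K - ε)) * (1 - θ/(K*(1+θ))) < 1 := by
  have hK0 : (0:ℝ) < K := lt_of_lt_of_le one_pos hK
  have h1θ : (0:ℝ) < 1 + θ := by linarith
  have hx : θ/(K*(1+θ)) < 1 := by
    rw [div_lt_one (by positivity)]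
    nlinarith
  have hxpos : (0:ℝ) < θ/(K*(1+θ)) := by positivity
  have h2 : (0:ℝ) < 1 - θ/(K*(1+θ)) := by linarith
  have h1 : (0:ℝ) < ((1 + θ)⁻¹) ^ (-(1/K - ε)) := Real.rpow_pos_of_pos (by positivity) _
  rw [← Real.log_neg_iff (by positivity)]
  rw [Real.log_mul (ne_of_gt h1) (ne_of_gt h2), Real.log_rpow (by positivity), Real.log_inv]
  have hub : Real.log (1 + θ) ≤ θ := by
    have := Real.log_le_sub_one_of_pos h1θ; linarith
  have hub2 : Real.log (1 - θ/(K*(1+θ))) ≤ -(θ/(K*(1+θ))) := by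
    have := Real.log_le_sub_one_of_pos h2; linarith
  have hcpos : (0:ℝ) ≤ 1/K - ε := by linarith
  have hmono : -(1/K - ε) * -Real.log (1 + θ) ≤ (1/K - ε) * θ := by
    have : -(1/K - ε) * -Real.log (1 + θ) = (1/K - ε) * Real.log (1 + θ) := by ring
    rw [this]
    exact mul_le_mul_of_nonneg_left hub hcpos
  have key : (1/K - ε) * θ - θ/(K*(1+θ)) < 0 := by
    have e : θ/(K*(1+θ)) - (1/K - ε)*θ = θ*(ε*K*(1+θ) - θ) / (K*(1+θ)) := by
      field_simp; ring
    have hp : (0:ℝ) < θ*(ε*K*(1+θ) - θ) / (K*(1+θ)) := by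
      apply div_pos _ (by positivity)
      apply mul_pos hθ
      nlinarith
    linarith
  linarith

lemma ceil_div_eq {n k : ℕ} (hk : 0 < k) (h : n % k ≠ 0) : (n + k - 1)/k = n/k + 1 := by
  have hmod := Nat.div_add_mod n k
  have hlt : n % k < k := Nat.mod_lt _ hk
  have h1 : 1 ≤ n % k := Nat.one_le_iff_ne_zero.mpr h
  have hmul : k*(n/k + 1) = k*(n/k) + k := by ring
  have he : n + k - 1 = (n % k - 1) + k*(n/k + 1) := by omega
  rw [he, Nat.add_mul_div_left _ _ hk, Nat.div_eq_of_lt (by omega), Nat.zero_add]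

set_option maxHeartbeats 1000000 in
theorem stmt1 (α : ℝ) (hα : 0 < α) (k : ℕ) (hk : 1 ≤ k) :
    ∃ n₀ : ℕ, ∀ n : ℕ, n₀ ≤ n →
      ∀ (V : Type) [Fintype V] [DecidableEq V] (G : SimpleGraph V) [DecidableRel G.Adj],
        Fintype.card V = n → (∀ v : V, α * n ≤ G.degree v) →
        ∃ U : Fin k → Finset V,
          (∀ i j : Fin k, i ≠ j → Disjoint (U i) (U j)) ∧
          (Finset.univ.biUnion U = Finset.univ) ∧
          (∀ i : Fin k, (U i).card = n / k ∨ (U i).card = (n + k - 1) / k) ∧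
          (∀ (v : V) (i : Fin k),
            (α / 2) * (U i).card ≤ ((U i).filter (fun u => G.Adj v u)).card) := by
  rcases lt_or_ge α 1 with hα1 | hα1
  swap
  · -- trivial case α ≥ 1 : hypotheses contradictory for n ≥ 1
    refine ⟨1, fun n hn V _ _ G _ hcard hdeg => ?_⟩
    exfalso
    have : Nonempty V := by
      rw [← Fintype.card_pos_iff, hcard]; omega
    obtain ⟨v⟩ := this
    have h1 := hdeg v
    have h2 : G.degree v < Fintype.card V := G.degree_lt_card_verts v
    rw [hcard] at h2
    have h3 : (G.degree v : ℝ) < n := by exact_mod_cast h2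
    have h4 : (1:ℝ) ≤ n := by
      have : 1 ≤ n := hn
      exact_mod_cast this
    nlinarith
  -- main case
  have hK1 : (1:ℝ) ≤ (k:ℝ) := by exact_mod_cast hk
  set K : ℝ := (k:ℝ) with hKdef
  have hK0 : (0:ℝ) < K := lt_of_lt_of_le one_pos hK1
  set ε : ℝ := α/(32*K^2) with hεdef
  set θ : ℝ := α/(64*K) with hθdef
  set β : ℝ := 1 - 1/(2*K) with hβdef
  have hεpos : 0 < ε := by positivity
  have hθpos : 0 < θ := by positivity
  have hθ1 : θ ≤ 1 := by
    rw [hθdef, div_le_one (by positivity)]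
    nlinarith
  have hθε : 2*θ ≤ ε*K := by
    have h1 : ε*K = α/(32*K) := by rw [hεdef]; field_simp
    have h2 : 2*θ = α/(32*K) := by rw [hθdef]; ring
    rw [h1, h2]
  have hεK : ε ≤ 1/K := by
    rw [hεdef, div_le_div_iff₀ (by positivity) hK0]
    nlinarith
  have hβpos : 0 < β := by
    rw [hβdef]
    have : 1/(2*K) ≤ 1/2 := by
      apply div_le_div_of_nonneg_left one_pos.le (by norm_num) (by linarith)
    linarith
  have hβ1 : β ≤ 1 := by
    rw [hβdef]
    have : 0 < 1/(2*K) := by positivity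
    linarith
  have h1θ : (0:ℝ) < 1 + θ := by linarith
  set r₁ : ℝ := ((2:ℝ)⁻¹) ^ (-(5*α/(8*K))) * β ^ α with hr₁def
  set r₂ : ℝ := (1 + θ) ^ (-(1/K + ε)) * (1 + θ/K) with hr₂def
  set r₃ : ℝ := ((1 + θ)⁻¹) ^ (-(1/K - ε)) * (1 - θ/(K*(1+θ))) with hr₃def
  have hr₁0 : 0 ≤ r₁ := by rw [hr₁def]; positivity
  have hr₂0 : 0 ≤ r₂ := by rw [hr₂def]; positivity
  have hr₃0 : 0 ≤ r₃ := by
    rw [hr₃def]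
    apply mul_nonneg (le_of_lt (Real.rpow_pos_of_pos (by positivity) _))
    have hx : θ/(K*(1+θ)) < 1 := by
      rw [div_lt_one (by positivity)]; nlinarith
    linarith
  have hr₁1 : r₁ < 1 := r1_lt_one hα hK1
  have hr₂1 : r₂ < 1 := r2_lt_one hK1 hθpos hεpos hθε
  have hr₃1 : r₃ < 1 := r3_lt_one hK1 hθpos hθ1 hεpos hθε hεK
  set r : ℝ := max r₁ (max r₂ r₃) with hrdef
  have hr0 : 0 ≤ r := le_trans hr₁0 (le_max_left _ _)
  have hr1 : r < 1 := max_lt hr₁1 (max_lt hr₂1 hr₃1)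
  -- eventual conditions
  have hten : Tendsto (fun n : ℕ => ((n:ℝ)*K + 2*K) * r^n) atTop (nhds 0) := by
    have h1 := tendsto_pow_const_mul_const_pow_of_lt_one 1 hr0 hr1
    have h2 := tendsto_pow_atTop_nhds_zero_of_lt_one hr0 hr1
    have h3 := (h1.const_mul K).add (h2.const_mul (2*K))
    have he : (fun n:ℕ => ((n:ℝ)*K + 2*K) * r^n)
        = (fun n:ℕ => K*((n:ℝ)^1*r^n) + 2*K*(r^n)) := by
      funext m; ring
    rw [he]
    simpa using h3
  have hE1 : ∀ᶠ n : ℕ in atTop, ((n:ℝ)*K + 2*K) * r^n < 1 :=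
    hten.eventually_lt_const one_pos
  have hE2 : ∀ᶠ n : ℕ in atTop, K + 1 ≤ (3*α/(32*K)) * n := by
    have h : Tendsto (fun n : ℕ => (3*α/(32*K)) * (n:ℝ)) atTop atTop :=
      Tendsto.const_mul_atTop (by positivity) tendsto_natCast_atTop_atTop
    exact h.eventually_ge_atTop (K+1)
  obtain ⟨n₀, hn₀⟩ := Filter.eventually_atTop.mp (hE1.and hE2)
  refine ⟨n₀, fun n hn V _ _ G _ hcard hdeg => ?_⟩
  obtain ⟨hE1n, hE2n⟩ := hn₀ n hn
  classical
  set T1 : ℝ := 5*α*n/(8*K) with hT1def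
  -- the counting (probabilistic) step
  set Bad1 : V × Fin k → Finset (V → Fin k) := fun p =>
    univ.filter (fun f => ((((G.neighborFinset p.1).filter (fun u => f u = p.2)).card : ℝ) < T1))
    with hBad1def
  set BadHi : Fin k → Finset (V → Fin k) := fun i =>
    univ.filter (fun f => ((n:ℝ)/K + ε*n < (((univ : Finset V).filter (fun u => f u = i)).card : ℝ)))
    with hBadHidef
  set BadLo : Fin k → Finset (V → Fin k) := fun i =>
    univ.filter (fun f => ((((univ : Finset V).filter (fun u => f u = i)).card : ℝ) < (n:ℝ)/K - ε*n))
    with hBadLodef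
  have hB1 : ∀ p : V × Fin k, ((Bad1 p).card : ℝ) ≤ K^n * r₁^n := by
    rintro ⟨v, i⟩
    have hdd : (G.neighborFinset v).card = G.degree v := G.card_neighborFinset_eq_degree v
    set d : ℕ := (G.neighborFinset v).card with hddef
    have hdn : d ≤ n := by
      rw [hddef, ← hcard]; exact Finset.card_le_univ _
    have hdα : α * (n:ℝ) ≤ (d:ℝ) := by
      rw [hdd]; exact hdeg v
    have hch := chernoff (G.neighborFinset v) i (b := (2:ℝ)⁻¹) (T := T1) (by norm_num)
      (Bad1 (v, i)) (fun f hf => by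
        simp only [hBad1def, Finset.mem_filter, Finset.mem_univ, true_and] at hf
        exact Real.rpow_le_rpow_of_exponent_ge (by norm_num) (by norm_num) (le_of_lt hf))
    rw [hcard, ← hKdef, ← hddef] at hch
    have he1 : ((2:ℝ)⁻¹ + (K - 1)) = K * β := by rw [hβdef]; field_simp; ring
    calc ((Bad1 (v,i)).card : ℝ)
        ≤ (2⁻¹:ℝ)^(-T1) * ((2⁻¹ + (K - 1))^d * K^(n - d)) := hch
      _ = ((2⁻¹:ℝ)^(-(5*α/(8*K))))^n * (K^n * (β^((d:ℕ):ℝ))) := by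
          rw [he1, mul_pow, Real.rpow_natCast]
          rw [show -T1 = (-(5*α/(8*K)))*(n:ℝ) by rw [hT1def]; ring]
          rw [Real.rpow_mul (by norm_num : (0:ℝ) ≤ 2⁻¹), Real.rpow_natCast]
          rw [show K^d * β^d * K^(n-d) = (K^d * K^(n-d)) * β^d by ring, ← pow_add]
          rw [show d + (n - d) = n from by omega]
          all_goals ring
      _ ≤ ((2⁻¹:ℝ)^(-(5*α/(8*K))))^n * (K^n * β^(α*(n:ℝ))) := by
          apply mul_le_mul_of_nonneg_left _ (by positivity)
          apply mul_le_mul_of_nonneg_left _ (by positivity)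
          exact Real.rpow_le_rpow_of_exponent_ge hβpos hβ1 hdα
      _ = K^n * r₁^n := by
          rw [show β^(α*(n:ℝ)) = (β^α)^n by
            rw [Real.rpow_mul hβpos.le, Real.rpow_natCast]]
          rw [hr₁def, mul_pow]
          ring
  have hBHi : ∀ i : Fin k, ((BadHi i).card : ℝ) ≤ K^n * r₂^n := by
    intro i
    have hch := chernoff (univ : Finset V) i (b := 1+θ) (T := (n:ℝ)/K + ε*n) (by positivity)
      (BadHi i) (fun f hf => by
        simp only [hBadHidef, Finset.mem_filter, Finset.mem_univ, true_and] at hf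
        exact Real.rpow_le_rpow_of_exponent_le (by linarith) (le_of_lt hf))
    rw [hcard, ← hKdef, Finset.card_univ, hcard] at hch
    have he1 : (1 + θ + (K - 1)) = K * (1 + θ/K) := by field_simp; ring
    calc ((BadHi i).card : ℝ)
        ≤ (1+θ)^(-((n:ℝ)/K + ε*n)) * ((1 + θ + (K - 1))^n * K^(n - n)) := hch
      _ = K^n * r₂^n := by
          rw [he1, mul_pow, Nat.sub_self, pow_zero, mul_one]
          rw [show -((n:ℝ)/K + ε*n) = (-(1/K + ε))*(n:ℝ) by ring]
          rw [Real.rpow_mul (le_of_lt h1θ), Real.rpow_natCast]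
          rw [hr₂def, mul_pow]
          ring
  have hBLo : ∀ i : Fin k, ((BadLo i).card : ℝ) ≤ K^n * r₃^n := by
    intro i
    have hinv1 : ((1:ℝ)+θ)⁻¹ ≤ 1 := by
      rw [inv_le_one_iff₀]; right; linarith
    have hch := chernoff (univ : Finset V) i (b := (1+θ)⁻¹) (T := (n:ℝ)/K - ε*n)
      (by positivity) (BadLo i) (fun f hf => by
        simp only [hBadLodef, Finset.mem_filter, Finset.mem_univ, true_and] at hf
        exact Real.rpow_le_rpow_of_exponent_ge (by positivity) hinv1 (le_of_lt hf))
    rw [hcard, ← hKdef, Finset.card_univ, hcard] at hch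
    have he1 : ((1 + θ)⁻¹ + (K - 1)) = K * (1 - θ/(K*(1+θ))) := by
      field_simp
      ring
    calc ((BadLo i).card : ℝ)
        ≤ ((1+θ)⁻¹)^(-((n:ℝ)/K - ε*n)) * (((1 + θ)⁻¹ + (K - 1))^n * K^(n - n)) := hch
      _ = K^n * r₃^n := by
          rw [he1, mul_pow, Nat.sub_self, pow_zero, mul_one]
          rw [show -((n:ℝ)/K - ε*n) = (-(1/K - ε))*(n:ℝ) by ring]
          rw [Real.rpow_mul (by positivity), Real.rpow_natCast]
          rw [hr₃def, mul_pow]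
          ring
  set Good : Finset (V → Fin k) :=
    univ.filter (fun f =>
      (∀ v i, T1 ≤ (((G.neighborFinset v).filter (fun u => f u = i)).card : ℝ)) ∧
      (∀ i, (((univ : Finset V).filter (fun u => f u = i)).card : ℝ) ≤ (n:ℝ)/K + ε*n ∧
        (n:ℝ)/K - ε*n ≤ (((univ : Finset V).filter (fun u => f u = i)).card : ℝ)))
    with hGooddef
  have hGoodne : Good.Nonempty := by
    by_contra hGe
    rw [Finset.not_nonempty_iff_eq_empty] at hGe
    have hcov : (univ : Finset (V → Fin k)) ⊆
        (univ.biUnion fun p : V × Fin k => Bad1 p) ∪ (univ.biUnion fun i => BadHi i ∪ BadLo i) := by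
      intro f _
      rw [Finset.mem_union]
      by_cases h1 : ∀ v i, T1 ≤ (((G.neighborFinset v).filter (fun u => f u = i)).card : ℝ)
      · by_cases h2 : ∀ i : Fin k,
            (((univ : Finset V).filter (fun u => f u = i)).card : ℝ) ≤ (n:ℝ)/K + ε*n ∧
            (n:ℝ)/K - ε*n ≤ (((univ : Finset V).filter (fun u => f u = i)).card : ℝ)
        · exfalso
          have : f ∈ Good := by
            rw [hGooddef, Finset.mem_filter]
            exact ⟨Finset.mem_univ _, h1, h2⟩
          rw [hGe] at this
          exact absurd this (Finset.notMem_empty f)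
        · right
          rcases not_forall.mp h2 with ⟨i, hi⟩
          rw [Finset.mem_biUnion]
          refine ⟨i, Finset.mem_univ _, ?_⟩
          rw [Finset.mem_union]
          rcases not_and_or.mp hi with hA | hB
          · left
            simp only [hBadHidef, Finset.mem_filter, Finset.mem_univ, true_and]
            exact not_le.mp hA
          · right
            simp only [hBadLodef, Finset.mem_filter, Finset.mem_univ, true_and]
            exact not_le.mp hB
      · left
        push_neg at h1
        obtain ⟨v, i, hvi⟩ := h1
        rw [Finset.mem_biUnion]
        refine ⟨(v, i), Finset.mem_univ _, ?_⟩
        simp only [hBad1def, Finset.mem_filter, Finset.mem_univ, true_and]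
        exact hvi
    have hcard1 : ((univ : Finset (V → Fin k)).card : ℝ)
        ≤ ((univ.biUnion fun p : V × Fin k => Bad1 p).card : ℝ)
          + ((univ.biUnion fun i => BadHi i ∪ BadLo i).card : ℝ) := by
      have h1 := Finset.card_le_card hcov
      have h2 := Finset.card_union_le (univ.biUnion fun p : V × Fin k => Bad1 p)
        (univ.biUnion fun i => BadHi i ∪ BadLo i)
      exact_mod_cast le_trans h1 h2
    have hcard2 : ((univ.biUnion fun p : V × Fin k => Bad1 p).card : ℝ)
        ≤ ((n:ℝ)*K) * (K^n * r₁^n) := by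
      calc ((univ.biUnion fun p : V × Fin k => Bad1 p).card : ℝ)
          ≤ ∑ p : V × Fin k, ((Bad1 p).card : ℝ) := by
            exact_mod_cast Finset.card_biUnion_le
        _ ≤ ∑ _p : V × Fin k, K^n * r₁^n := Finset.sum_le_sum (fun p _ => hB1 p)
        _ = (Fintype.card (V × Fin k) : ℝ) * (K^n * r₁^n) := by
            rw [Finset.sum_const, Finset.card_univ, nsmul_eq_mul]
        _ = ((n:ℝ)*K) * (K^n * r₁^n) := by
            rw [Fintype.card_prod, hcard, Fintype.card_fin, hKdef]
            push_cast
            ring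
    have hcard3 : ((univ.biUnion fun i => BadHi i ∪ BadLo i).card : ℝ)
        ≤ K * (K^n * r₂^n + K^n * r₃^n) := by
      calc ((univ.biUnion fun i => BadHi i ∪ BadLo i).card : ℝ)
          ≤ ∑ i : Fin k, (((BadHi i ∪ BadLo i)).card : ℝ) := by
            exact_mod_cast Finset.card_biUnion_le
        _ ≤ ∑ i : Fin k, (((BadHi i).card : ℝ) + ((BadLo i).card : ℝ)) := by
            apply Finset.sum_le_sum
            intro i _
            exact_mod_cast Finset.card_union_le _ _
        _ ≤ ∑ _i : Fin k, (K^n * r₂^n + K^n * r₃^n) := by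
            apply Finset.sum_le_sum
            intro i _
            exact add_le_add (hBHi i) (hBLo i)
        _ = K * (K^n * r₂^n + K^n * r₃^n) := by
            rw [Finset.sum_const, Finset.card_univ, Fintype.card_fin, nsmul_eq_mul, hKdef]
    have huniv : ((univ : Finset (V → Fin k)).card : ℝ) = K^n := by
      rw [Finset.card_univ, Fintype.card_fun, Fintype.card_fin, hcard, hKdef]
      push_cast
      ring
    have hle1 : r₁^n ≤ r^n := pow_le_pow_left₀ hr₁0 (le_max_left _ _) n
    have hle2 : r₂^n ≤ r^n :=
      pow_le_pow_left₀ hr₂0 (le_trans (le_max_left _ _) (le_max_right _ _)) n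
    have hle3 : r₃^n ≤ r^n :=
      pow_le_pow_left₀ hr₃0 (le_trans (le_max_right _ _) (le_max_right _ _)) n
    have hKn : (0:ℝ) < K^n := by positivity
    have hfinal : ((univ : Finset (V → Fin k)).card : ℝ) < K^n := by
      calc ((univ : Finset (V → Fin k)).card : ℝ)
          ≤ ((n:ℝ)*K) * (K^n * r₁^n) + K * (K^n * r₂^n + K^n * r₃^n) := by
            linarith
        _ ≤ ((n:ℝ)*K) * (K^n * r^n) + K * (K^n * r^n + K^n * r^n) := by
            gcongr <;> positivity
        _ = K^n * (((n:ℝ)*K + 2*K) * r^n) := by ring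
        _ < K^n * 1 := by
            exact mul_lt_mul_of_pos_left hE1n hKn
        _ = K^n := mul_one _
    rw [huniv] at hfinal
    exact lt_irrefl _ hfinal
  obtain ⟨f, hfGood⟩ := hGoodne
  rw [hGooddef, Finset.mem_filter] at hfGood
  obtain ⟨-, hfX, hfs⟩ := hfGood
  -- repair step
  have hkpos : 0 < k := hk
  set t : Fin k → ℕ := fun i => n / k + (if (i:ℕ) < n % k then 1 else 0) with htdef
  have htval : ∀ i, t i = n / k + (if (i:ℕ) < n % k then 1 else 0) := fun i => rfl
  have ht : ∑ i, t i = Fintype.card V := by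
    rw [hcard]
    have h1 : ∑ i : Fin k, t i
        = ∑ i : Fin k, (n/k) + ∑ i : Fin k, (if (i:ℕ) < n % k then 1 else 0) := by
      rw [← Finset.sum_add_distrib]
    have h2 : ∑ _i : Fin k, (n/k) = k * (n/k) := by
      rw [Finset.sum_const, Finset.card_univ, Fintype.card_fin, smul_eq_mul]
    have h3 : ∑ i : Fin k, (if (i:ℕ) < n % k then 1 else 0) = n % k := by
      have h4 : (univ.filter (fun i : Fin k => (i:ℕ) < n % k))
          = Finset.Iio (⟨n % k, Nat.mod_lt n hkpos⟩ : Fin k) := by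
        ext j
        simp [Finset.mem_Iio, Fin.lt_def]
      rw [Finset.sum_ite, Finset.sum_const, Finset.sum_const, h4, Fin.card_Iio]
      simp
    rw [h1, h2, h3]
    have := Nat.div_add_mod n k
    omega
  obtain ⟨g, hg1, hg2⟩ := repair_aux t ht
    (∑ i, ((univ.filter (fun v => f v = i)).card - t i)) f rfl
  set M : ℕ := ∑ i, ((univ.filter (fun v => f v = i)).card - t i) with hMdef
  have hdivlb : (n:ℝ)/K - 1 < ((n/k : ℕ):ℝ) := by
    have h1 : n < k*(n/k) + k := by
      have h := Nat.div_add_mod n k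
      have h' := Nat.mod_lt n hkpos
      omega
    have h2 : (n:ℝ) < K*((n/k : ℕ):ℝ) + K := by rw [hKdef]; exact_mod_cast h1
    rw [sub_lt_iff_lt_add, div_lt_iff₀ hK0]
    nlinarith
  have hdivub : ((n/k : ℕ):ℝ) ≤ (n:ℝ)/K := by
    rw [hKdef]; exact Nat.cast_div_le
  have hM : (M:ℝ) ≤ K*(ε*n+1) := by
    have h1 : (M:ℝ) = ∑ i : Fin k, (((univ.filter (fun v => f v = i)).card - t i : ℕ) : ℝ) := by
      rw [hMdef]; push_cast; ring
    rw [h1]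
    have h2 : ∀ i : Fin k, (((univ.filter (fun v => f v = i)).card - t i : ℕ) : ℝ) ≤ ε*n + 1 := by
      intro i
      rcases le_or_gt (univ.filter (fun v => f v = i)).card (t i) with h | h
      · rw [Nat.sub_eq_zero_of_le h]
        have : (0:ℝ) ≤ ε*n := by positivity
        norm_num
        linarith
      · rw [Nat.cast_sub h.le]
        have hub := (hfs i).1
        have htlb : ((n/k : ℕ):ℝ) ≤ (t i : ℝ) := by
          have : n/k ≤ t i := by rw [htval i]; split <;> omega
          exact_mod_cast this
        linarith
    calc ∑ i : Fin k, (((univ.filter (fun v => f v = i)).card - t i : ℕ) : ℝ)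
        ≤ ∑ _i : Fin k, (ε*n + 1) := Finset.sum_le_sum (fun i _ => h2 i)
      _ = K*(ε*n+1) := by
          rw [Finset.sum_const, Finset.card_univ, Fintype.card_fin, nsmul_eq_mul, hKdef]
  -- final assembly
  refine ⟨fun i => univ.filter (fun v => g v = i), ?_, ?_, ?_, ?_⟩
  · intro i j hij
    rw [Finset.disjoint_left]
    intro a ha hb
    simp only [Finset.mem_filter] at ha hb
    exact hij (ha.2 ▸ hb.2 ▸ rfl)
  · apply Finset.eq_univ_iff_forall.mpr
    intro v
    rw [Finset.mem_biUnion]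
    exact ⟨g v, Finset.mem_univ _, Finset.mem_filter.mpr ⟨Finset.mem_univ _, rfl⟩⟩
  · intro i
    rw [hg1 i, htval i]
    by_cases hi : (i:ℕ) < n % k
    · right
      simp only [hi, if_true]
      have hmod : n % k ≠ 0 := by omega
      rw [ceil_div_eq hkpos hmod]
    · left; simp [hi]
  · intro v i
    have e1 : (univ.filter (fun w => g w = i)).filter (fun u => G.Adj v u)
        = (G.neighborFinset v).filter (fun u => g u = i) := by
      ext u
      simp only [Finset.mem_filter, Finset.mem_univ, true_and, SimpleGraph.mem_neighborFinset]
      tauto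
    rw [e1, hg1 i]
    have hsub : (G.neighborFinset v).filter (fun u => f u = i)
        ⊆ ((G.neighborFinset v).filter (fun u => g u = i))
          ∪ (univ.filter (fun w => ¬ f w = g w)) := by
      intro u hu
      rw [Finset.mem_filter] at hu
      rw [Finset.mem_union, Finset.mem_filter, Finset.mem_filter]
      by_cases hgu : g u = i
      · left; exact ⟨hu.1, hgu⟩
      · right
        refine ⟨Finset.mem_univ _, fun h => hgu ?_⟩
        rw [← h, hu.2]
    have hcard1 : ((G.neighborFinset v).filter (fun u => f u = i)).card
        ≤ ((G.neighborFinset v).filter (fun u => g u = i)).card + M := by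
      calc ((G.neighborFinset v).filter (fun u => f u = i)).card
          ≤ (((G.neighborFinset v).filter (fun u => g u = i))
              ∪ (univ.filter (fun w => ¬ f w = g w))).card := Finset.card_le_card hsub
        _ ≤ ((G.neighborFinset v).filter (fun u => g u = i)).card
            + (univ.filter (fun w => ¬ f w = g w)).card := Finset.card_union_le _ _
        _ ≤ _ := by
            have := hg2
            omega
    have hX := hfX v i
    have hY : T1 - (M:ℝ) ≤ (((G.neighborFinset v).filter (fun u => g u = i)).card : ℝ) := by
      have h' : (((G.neighborFinset v).filter (fun u => f u = i)).card : ℝ)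
          ≤ (((G.neighborFinset v).filter (fun u => g u = i)).card : ℝ) + (M:ℝ) := by
        exact_mod_cast hcard1
      linarith
    have htub : ((t i : ℕ):ℝ) ≤ (n:ℝ)/K + 1 := by
      have h7 : t i ≤ n/k + 1 := by rw [htval i]; split <;> omega
      have h8 : ((t i : ℕ):ℝ) ≤ ((n/k : ℕ):ℝ) + 1 := by exact_mod_cast h7
      linarith
    have hKε : K*(ε*(n:ℝ)+1) = (α/(32*K))*(n:ℝ) + K := by
      rw [hεdef]; field_simp
    have hid : 5*α*(n:ℝ)/(8*K) - ((α/(32*K))*(n:ℝ) + K) - ((α/2)*((n:ℝ)/K + 1))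
        = (3*α/(32*K))*(n:ℝ) - K - α/2 := by
      field_simp
      ring
    have h5 : (α/2)*((t i : ℕ):ℝ) ≤ (α/2)*((n:ℝ)/K + 1) :=
      mul_le_mul_of_nonneg_left htub (by positivity)
    have h6 : (M:ℝ) ≤ (α/(32*K))*(n:ℝ) + K := by
      rw [← hKε]; exact hM
    have hT1 : T1 = 5*α*(n:ℝ)/(8*K) := hT1def
    linarith
end

section
/- If G is a connected graph on n vertices that is not Hamiltonian and satisfies |N_G(A)| ≥ 2|A| for every vertex set A with |A| ≤ R, then the number of boosters for G is at least R²/2. -/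
/-- The length of a longest path in `G`. -/
noncomputable def maxPathLength {V : Type*} (G : SimpleGraph V) : ℕ :=
  sSup {l : ℕ | ∃ (u v : V) (p : G.Walk u v), p.IsPath ∧ p.length = l}

/-- A booster for `G` is a non-edge `s` such that adding `s` makes `G` Hamiltonian or
strictly increases the length of a longest path. -/
noncomputable def IsBooster {V : Type*} [Fintype V] [DecidableEq V] (G : SimpleGraph V) (s : Sym2 V) : Prop :=
  ¬ s.IsDiag ∧ s ∉ G.edgeSet ∧
    ((G ⊔ SimpleGraph.fromEdgeSet {s}).IsHamiltonian ∨
      maxPathLength G < maxPathLength (G ⊔ SimpleGraph.fromEdgeSet {s}))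

namespace PosaAux

open SimpleGraph Walk Finset

variable {V : Type*}

lemma loop_length_zero {G : SimpleGraph V} {u : V} {p : G.Walk u u} (hp : p.IsPath) :
    p.length = 0 := by
  cases p with
  | nil => rfl
  | cons h q =>
    exfalso
    have h1 : u ∈ q.support := q.end_mem_support
    have h2 := hp.support_nodup
    rw [support_cons] at h2
    exact (List.nodup_cons.mp h2).1 h1

section MaxLen

variable [Fintype V]

lemma bddAbove_pathLengths (G : SimpleGraph V) :
    BddAbove {l : ℕ | ∃ (u v : V) (p : G.Walk u v), p.IsPath ∧ p.length = l} := by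
  refine ⟨Fintype.card V, ?_⟩
  rintro l ⟨u, v, p, hp, rfl⟩
  exact hp.length_lt.le

lemma length_le_maxPathLength (G : SimpleGraph V) {u v : V} (p : G.Walk u v) (hp : p.IsPath) :
    p.length ≤ maxPathLength G :=
  le_csSup (bddAbove_pathLengths G) ⟨u, v, p, hp, rfl⟩

lemma exists_maxPath (G : SimpleGraph V) [Nonempty V] :
    ∃ (u v : V) (p : G.Walk u v), p.IsPath ∧ p.length = maxPathLength G := by
  have hne : {l : ℕ | ∃ (u v : V) (p : G.Walk u v), p.IsPath ∧ p.length = l}.Nonempty :=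
    ⟨0, Classical.arbitrary V, Classical.arbitrary V, Walk.nil, Walk.IsPath.nil, rfl⟩
  exact Nat.sSup_mem hne (bddAbove_pathLengths G)

/-- From a cycle in a connected graph: either the graph is Hamiltonian, or there is
a path as long as the cycle. -/
lemma cycle_consequence [DecidableEq V] {H : SimpleGraph V} (hH : H.Connected) {a : V}
    (c : H.Walk a a) (hc : c.IsCycle) :
    H.IsHamiltonian ∨ ∃ (x y : V) (q : H.Walk x y), q.IsPath ∧ q.length = c.length := by
  by_cases hall : ∀ x, x ∈ c.support
  · left
    intro _
    refine ⟨a, c, hc, ?_⟩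
    intro x
    rw [support_tail_of_not_nil c hc.not_nil]
    apply List.count_eq_one_of_mem hc.support_nodup
    obtain ⟨b', hadj, q, rfl⟩ := not_nil_iff.mp hc.not_nil
    have hx := hall x
    rw [support_cons] at hx ⊢
    rw [List.tail_cons]
    rcases List.mem_cons.mp hx with rfl | hx
    · exact q.end_mem_support
    · exact hx
  · right
    push_neg at hall
    obtain ⟨z0, hz0⟩ := hall
    obtain ⟨W⟩ := hH.preconnected z0 a
    obtain ⟨d, _, hdS, hdS'⟩ := W.exists_boundary_dart {v | v ∉ c.support} hz0
      (by simp [c.start_mem_support])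
    have hy : d.snd ∈ c.support := not_not.mp hdS'
    have hc' := hc.rotate hy
    have hnil : ¬(c.rotate _ hy).Nil := hc'.not_nil
    have htp : (c.rotate _ hy).tail.IsPath := by
      rw [isPath_def, support_tail_of_not_nil _ hnil]
      exact hc'.support_nodup
    have hfst : d.fst ∉ (c.rotate _ hy).support := by
      intro hmem
      rw [support_eq_cons] at hmem
      rcases List.mem_cons.mp hmem with h | h
      · exact hdS (h ▸ hy)
      · exact hdS (List.mem_of_mem_tail ((support_rotate c _ hy).mem_iff.mp h))
    refine ⟨d.fst, _, Walk.cons d.adj (c.rotate _ hy).tail.reverse, ?_, ?_⟩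
    · rw [isPath_def, support_cons, List.nodup_cons, support_reverse, List.nodup_reverse]
      refine ⟨?_, htp.support_nodup⟩
      rw [List.mem_reverse, support_tail_of_not_nil _ hnil]
      exact fun h => hfst (List.mem_of_mem_tail h)
    · have hlr : (c.rotate _ hy).length = c.length := by
        have h1 := congrArg Walk.length (c.take_spec hy)
        rw [length_append] at h1
        rw [Walk.rotate, length_append]
        omega
      have h2 := length_tail_add_one hnil
      rw [length_cons, length_reverse]
      omega


lemma isBooster_of_maxPath [DecidableEq V] {G : SimpleGraph V}
    (hconn : G.Connected) (hham : ¬ G.IsHamiltonian) {u w : V} (p : G.Walk u w)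
    (hp : p.IsPath) (hlen : p.length = maxPathLength G) (h2 : 2 ≤ p.length) :
    IsBooster G s(u, w) := by
  have hne : u ≠ w := by
    rintro rfl
    have := loop_length_zero hp
    omega
  have hedge : s(w, u) ∉ p.edges := by
    intro hmem
    cases p with
    | nil => simp at h2
    | cons hadj' q' =>
      rw [edges_cons, List.mem_cons] at hmem
      rcases hmem with he | he
      · rw [Sym2.eq_iff] at he
        rcases he with ⟨rfl, rfl⟩ | ⟨rfl, -⟩
        · exact hadj'.ne rfl
        · have := loop_length_zero (hp.of_cons)
          rw [length_cons] at h2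
          omega
      · have h1 : u ∈ q'.support := q'.snd_mem_support_of_mem_edges he
        exact ((Walk.cons_isPath_iff _ _).mp hp).2 h1
  have key : ∀ (H : SimpleGraph V), G ≤ H → H.Adj w u → H.Connected →
      H.IsHamiltonian ∨ p.length + 1 ≤ maxPathLength H := by
    intro H hle hadj hHc
    have hq : (p.mapLe hle).IsPath := hp.mapLe hle
    have hqe : (p.mapLe hle).edges = p.edges := by
      have : ∀ e, Sym2.map (⇑(Hom.ofLE hle)) e = e := fun e => by
        induction e using Sym2.ind with
        | _ x y => rfl
      simp [Walk.mapLe, Walk.edges_map, this, List.map_congr_left fun e _ => this e]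
    have hcyc : (Walk.cons hadj (p.mapLe hle)).IsCycle := by
      rw [Walk.cons_isCycle_iff]
      exact ⟨hq, by rw [hqe]; exact hedge⟩
    rcases cycle_consequence hHc _ hcyc with hH | ⟨x, y, q, hq', hql⟩
    · exact Or.inl hH
    · right
      have hle2 := length_le_maxPathLength H q hq'
      rw [hql, length_cons] at hle2
      simpa using hle2
  have hnotedge : s(u, w) ∉ G.edgeSet := by
    intro hmem
    rcases key G le_rfl ((SimpleGraph.mem_edgeSet G).mp hmem).symm hconn with hH | hlt
    · exact hham hH
    · rw [hlen] at hlt; omega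
  refine ⟨by simpa [Sym2.isDiag_iff_proj_eq] using hne, hnotedge, ?_⟩
  have hadj : (G ⊔ SimpleGraph.fromEdgeSet {s(u, w)}).Adj w u := by
    refine Or.inr ?_
    rw [fromEdgeSet_adj]
    exact ⟨by rw [Set.mem_singleton_iff, Sym2.eq_swap], hne.symm⟩
  rcases key _ le_sup_left hadj (hconn.mono le_sup_left) with hH | hlt
  · exact Or.inl hH
  · exact Or.inr (by rw [← hlen]; omega)

end MaxLen

section Rot

variable [DecidableEq V] {G : SimpleGraph V}

/-- The Pósa rotation of a path `q : a → w` at a pivot `x ∈ q.support` using the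
edge `w ~ x`: the new path goes `a → x` along `q`, jumps to `w`, and walks back
to the successor of `x`. -/
def rotExt {a w x : V} (q : G.Walk a w) (hx : x ∈ q.support) (hadj : G.Adj w x) :
    G.Walk a ((q.dropUntil x hx).getVert 1) :=
  (q.takeUntil x hx).append (Walk.cons hadj.symm (q.dropUntil x hx).tail.reverse)

lemma rotExt_support_perm {a w x : V} (q : G.Walk a w) (hx : x ∈ q.support) (hadj : G.Adj w x) :
    (rotExt q hx hadj).support.Perm q.support := by
  have hd : ¬(q.dropUntil x hx).Nil := not_nil_of_ne hadj.ne'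
  have h1 : (rotExt q hx hadj).support
      = (q.takeUntil x hx).support ++ ((q.dropUntil x hx).tail.support).reverse := by
    rw [rotExt, support_append, support_cons, List.tail_cons, support_reverse]
  have h2 : q.support = (q.takeUntil x hx).support ++ (q.dropUntil x hx).tail.support := by
    conv_lhs => rw [← take_spec q hx]
    rw [support_append, support_tail_of_not_nil _ hd]
  rw [h1, h2]
  exact List.Perm.append_left _ (List.reverse_perm _)

lemma rotExt_isPath {a w x : V} (q : G.Walk a w) (hx : x ∈ q.support) (hadj : G.Adj w x)
    (hq : q.IsPath) : (rotExt q hx hadj).IsPath := by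
  rw [isPath_def] at hq ⊢
  exact ((rotExt_support_perm q hx hadj).nodup_iff).mpr hq

lemma rotExt_length {a w x : V} (q : G.Walk a w) (hx : x ∈ q.support) (hadj : G.Adj w x) :
    (rotExt q hx hadj).length = q.length := by
  have h := (rotExt_support_perm q hx hadj).length_eq
  rw [length_support, length_support] at h
  omega

lemma rotExt_mem_support {a w x : V} (q : G.Walk a w) (hx : x ∈ q.support) (hadj : G.Adj w x)
    (y : V) : y ∈ (rotExt q hx hadj).support ↔ y ∈ q.support :=
  (rotExt_support_perm q hx hadj).mem_iff

lemma dropUntil_edges_eq {a w x : V} (q : G.Walk a w) (hx : x ∈ q.support) (hxw : x ≠ w) :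
    (q.dropUntil x hx).edges
      = s(x, (q.dropUntil x hx).getVert 1) :: (q.dropUntil x hx).tail.edges := by
  have hd : ¬(q.dropUntil x hx).Nil := not_nil_of_ne hxw
  conv_lhs => rw [← cons_tail_eq _ hd]
  rw [edges_cons]

lemma rotExt_edges_iff {a w x : V} (q : G.Walk a w) (hx : x ∈ q.support) (hadj : G.Adj w x)
    (e : Sym2 V) :
    e ∈ (rotExt q hx hadj).edges ↔
      e ∈ (q.takeUntil x hx).edges ∨ e = s(x, w) ∨ e ∈ (q.dropUntil x hx).tail.edges := by
  rw [rotExt, edges_append, edges_cons, edges_reverse, List.mem_append, List.mem_cons,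
    List.mem_reverse]

lemma walk_edges_iff {a w x : V} (q : G.Walk a w) (hx : x ∈ q.support) (hxw : x ≠ w)
    (e : Sym2 V) :
    e ∈ q.edges ↔ e ∈ (q.takeUntil x hx).edges
      ∨ e = s(x, (q.dropUntil x hx).getVert 1) ∨ e ∈ (q.dropUntil x hx).tail.edges := by
  conv_lhs => rw [← take_spec q hx]
  rw [edges_append, List.mem_append, dropUntil_edges_eq q hx hxw, List.mem_cons]

lemma edge_rotEnd_mem {a w x : V} (q : G.Walk a w) (hx : x ∈ q.support) (hxw : x ≠ w) :
    s(x, (q.dropUntil x hx).getVert 1) ∈ q.edges :=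
  (walk_edges_iff q hx hxw _).mpr (Or.inr (Or.inl rfl))

/-- The set of walks obtainable from `p` by a sequence of Pósa rotations (fixing
the start vertex `a`). -/
inductive IsRot {a b : V} (p : G.Walk a b) : {w : V} → G.Walk a w → Prop
  | base : IsRot p p
  | rot {w x : V} {q : G.Walk a w} (hq : IsRot p q) (hx : x ∈ q.support) (hadj : G.Adj w x) :
      IsRot p (rotExt q hx hadj)

/-- The endpoints obtainable from `p` by sequences of rotations. -/
def rotSet {a b : V} (p : G.Walk a b) : Set V := {w | ∃ q : G.Walk a w, IsRot p q}

lemma isRot_isPath {a b : V} {p : G.Walk a b} (hp : p.IsPath) :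
    ∀ {w : V} {q : G.Walk a w}, IsRot p q → q.IsPath := by
  intro w q h
  induction h with
  | base => exact hp
  | rot hq hx hadj ih => exact rotExt_isPath _ hx hadj ih

lemma isRot_length {a b : V} {p : G.Walk a b} :
    ∀ {w : V} {q : G.Walk a w}, IsRot p q → q.length = p.length := by
  intro w q h
  induction h with
  | base => rfl
  | rot hq hx hadj ih => rw [rotExt_length]; exact ih

lemma isRot_mem_support {a b : V} {p : G.Walk a b} :
    ∀ {w : V} {q : G.Walk a w}, IsRot p q → ∀ y, (y ∈ q.support ↔ y ∈ p.support) := by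
  intro w q h
  induction h with
  | base => exact fun y => Iff.rfl
  | rot hq hx hadj ih => exact fun y => (rotExt_mem_support _ hx hadj y).trans (ih y)

lemma isRot_bad_edges {a b : V} {p : G.Walk a b} {x : V}
    (hxU : x ∉ rotSet p) (hxE : ∀ y ∈ rotSet p, s(x, y) ∉ p.edges) :
    ∀ {w : V} {q : G.Walk a w}, IsRot p q →
      ∀ y, (s(x, y) ∈ q.edges ↔ s(x, y) ∈ p.edges) := by
  intro w q h
  induction h with
  | base => exact fun y => Iff.rfl
  | @rot w' x' q' hq' hx' hadj' ih =>
    intro y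
    have hw'U : w' ∈ rotSet p := ⟨q', hq'⟩
    have hnE : (q'.dropUntil x' hx').getVert 1 ∈ rotSet p :=
      ⟨rotExt q' hx' hadj', hq'.rot hx' hadj'⟩
    have hxx' : x ≠ x' := by
      rintro rfl
      exact hxE _ hnE ((ih _).mp (edge_rotEnd_mem q' hx' hadj'.ne'))
    have hxw' : x ≠ w' := fun h => hxU (h ▸ hw'U)
    have hxn : x ≠ (q'.dropUntil x' hx').getVert 1 := fun h => hxU (h ▸ hnE)
    have h1 : s(x, y) ≠ s(x', w') := by
      intro h
      rw [Sym2.eq_iff] at h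
      rcases h with ⟨rfl, rfl⟩ | ⟨rfl, rfl⟩
      · exact hxx' rfl
      · exact hxw' rfl
    have h2 : s(x, y) ≠ s(x', (q'.dropUntil x' hx').getVert 1) := by
      intro h
      rw [Sym2.eq_iff] at h
      rcases h with ⟨rfl, rfl⟩ | ⟨rfl, rfl⟩
      · exact hxx' rfl
      · exact hxn rfl
    have h3 := walk_edges_iff q' hx' hadj'.ne' s(x, y)
    have h4 := ih y
    rw [rotExt_edges_iff]
    tauto

lemma posa_neighbor {a b : V} {p : G.Walk a b} (hp : p.IsPath)
    (hmax : ∀ {u' v' : V} (r : G.Walk u' v'), r.IsPath → r.length ≤ p.length)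
    {x : V} (hxU : x ∉ rotSet p) {u : V} (hu : u ∈ rotSet p) (hadj : G.Adj u x) :
    ∃ y ∈ rotSet p, s(x, y) ∈ p.edges := by
  by_contra hbad
  push_neg at hbad
  obtain ⟨q, hq⟩ := hu
  have hqp := isRot_isPath hp hq
  have hxs : x ∈ q.support := by
    by_contra hxs
    have hcp : (q.concat hadj).IsPath := by
      rw [isPath_def, support_concat, List.nodup_append']
      refine ⟨hqp.support_nodup, List.nodup_singleton x, ?_⟩
      simpa using hxs
    have hlen := hmax _ hcp
    rw [length_concat, isRot_length hq] at hlen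
    omega
  have hnE : (q.dropUntil x hxs).getVert 1 ∈ rotSet p :=
    ⟨rotExt q hxs hadj, hq.rot hxs hadj⟩
  exact hbad _ hnE ((isRot_bad_edges hxU hbad hq _).mp (edge_rotEnd_mem q hxs hadj.ne'))

section Count

variable [Fintype V]

lemma card_incident_head_le_one {u v : V} (p : G.Walk u v) (hp : p.IsPath) :
    (Finset.univ.filter fun z => s(z, u) ∈ p.edges).card ≤ 1 := by
  cases p with
  | nil => simp
  | @cons _ v₀ _ h q =>
    have hsub : (Finset.univ.filter fun z => s(z, u) ∈ (Walk.cons h q).edges)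
        ⊆ {v₀} := by
      intro z hz
      rw [Finset.mem_filter, edges_cons, List.mem_cons] at hz
      rcases hz.2 with he | he
      · rw [Sym2.eq_iff] at he
        rcases he with ⟨rfl, h'⟩ | ⟨rfl, -⟩
        · exact absurd h' h.ne
        · exact Finset.mem_singleton_self _
      · exact absurd (q.snd_mem_support_of_mem_edges he)
          ((Walk.cons_isPath_iff _ _).mp hp).2
    exact (Finset.card_le_card hsub).trans (le_of_eq (Finset.card_singleton _))

lemma card_incident_le_two {u v : V} (p : G.Walk u v) (y : V) :
    p.IsPath → (Finset.univ.filter fun z => s(z, y) ∈ p.edges).card ≤ 2 := by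
  induction p with
  | nil => intro _; simp
  | @cons u₀ v₀ w₀ h q ih =>
    intro hp
    by_cases hy : y = u₀
    · rw [hy]
      exact (card_incident_head_le_one _ hp).trans (by omega)
    by_cases hy' : y = v₀
    · rw [hy']
      have hsub : (Finset.univ.filter fun z => s(z, v₀) ∈ (Walk.cons h q).edges)
          ⊆ insert u₀ (Finset.univ.filter fun z => s(z, v₀) ∈ q.edges) := by
        intro z hz
        rw [Finset.mem_filter, edges_cons, List.mem_cons] at hz
        rcases hz.2 with he | he
        · rw [Sym2.eq_iff] at he
          rcases he with ⟨rfl, -⟩ | ⟨rfl, h'⟩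
          · exact Finset.mem_insert_self _ _
          · exact absurd rfl (h' ▸ h.ne)
        · exact Finset.mem_insert_of_mem (Finset.mem_filter.mpr ⟨Finset.mem_univ _, he⟩)
      refine (Finset.card_le_card hsub).trans ?_
      refine (Finset.card_insert_le _ _).trans ?_
      have := card_incident_head_le_one q (hp.of_cons)
      omega
    · have hsub : (Finset.univ.filter fun z => s(z, y) ∈ (Walk.cons h q).edges)
          ⊆ Finset.univ.filter fun z => s(z, y) ∈ q.edges := by
        intro z hz
        rw [Finset.mem_filter, edges_cons, List.mem_cons] at hz
        rcases hz.2 with he | he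
        · rw [Sym2.eq_iff] at he
          rcases he with ⟨-, h'⟩ | ⟨-, h'⟩
          · exact absurd h' hy'
          · exact absurd h' hy
        · exact Finset.mem_filter.mpr ⟨Finset.mem_univ _, he⟩
      exact (Finset.card_le_card hsub).trans (ih (hp.of_cons))

lemma card_incident_end_le_one {u v : V} (p : G.Walk u v) (hp : p.IsPath) :
    (Finset.univ.filter fun z => s(z, v) ∈ p.edges).card ≤ 1 := by
  have h := card_incident_head_le_one p.reverse hp.reverse
  have he : ∀ z : V, (s(z, v) ∈ p.reverse.edges) ↔ (s(z, v) ∈ p.edges) := by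
    intro z
    rw [edges_reverse, List.mem_reverse]
  calc (Finset.univ.filter fun z => s(z, v) ∈ p.edges).card
      = (Finset.univ.filter fun z => s(z, v) ∈ p.reverse.edges).card := by
        apply congrArg
        apply Finset.filter_congr
        intro z _
        simp [he z]
    _ ≤ 1 := h

lemma rotSet_card_gt {G : SimpleGraph V} [DecidableRel G.Adj] (R : ℕ)
    (hexp : ∀ A : Finset V, A.card ≤ R →
      2 * A.card ≤ ((Finset.univ \ A).filter (fun v => ∃ u ∈ A, G.Adj u v)).card)
    {a b : V} {p : G.Walk a b} (hp : p.IsPath)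
    (hmax : ∀ {u' v' : V} (r : G.Walk u' v'), r.IsPath → r.length ≤ p.length) :
    R < (Set.toFinite (rotSet p)).toFinset.card := by
  by_contra hle
  push_neg at hle
  set A := (Set.toFinite (rotSet p)).toFinset with hA
  have hmemA : ∀ z, z ∈ A ↔ z ∈ rotSet p := fun z => Set.Finite.mem_toFinset _
  have hb : b ∈ A := (hmemA b).mpr ⟨p, IsRot.base⟩
  have h1 := hexp A hle
  have hsub : (Finset.univ \ A).filter (fun v => ∃ u ∈ A, G.Adj u v)
      ⊆ A.biUnion (fun y => Finset.univ.filter fun z => s(z, y) ∈ p.edges) := by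
    intro z hz
    rw [Finset.mem_filter, Finset.mem_sdiff] at hz
    obtain ⟨⟨-, hzA⟩, u, huA, hadj⟩ := hz
    obtain ⟨y, hy, hyE⟩ := posa_neighbor hp hmax (fun h => hzA ((hmemA z).mpr h))
      ((hmemA u).mp huA) hadj
    exact Finset.mem_biUnion.mpr ⟨y, (hmemA y).mpr hy,
      Finset.mem_filter.mpr ⟨Finset.mem_univ _, hyE⟩⟩
  have hcard : (A.biUnion (fun y => Finset.univ.filter fun z => s(z, y) ∈ p.edges)).card
      ≤ 2 * A.card - 1 := by
    refine Finset.card_biUnion_le.trans ?_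
    rw [← Finset.sum_erase_add _ _ hb]
    have hb1 : (Finset.univ.filter fun z => s(z, b) ∈ p.edges).card ≤ 1 :=
      card_incident_end_le_one p hp
    have hrest : ∑ y ∈ A.erase b, (Finset.univ.filter fun z => s(z, y) ∈ p.edges).card
        ≤ (A.erase b).card * 2 := by
      refine Finset.sum_le_card_nsmul _ _ 2 ?_
      intro y _
      exact card_incident_le_two p y hp
    have hbe : (A.erase b).card = A.card - 1 := Finset.card_erase_of_mem hb
    have hApos : 1 ≤ A.card := Finset.card_pos.mpr ⟨b, hb⟩
    omega
  have h2 := (Finset.card_le_card hsub).trans hcard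
  have hApos : 1 ≤ A.card := Finset.card_pos.mpr ⟨b, hb⟩
  omega

end Count

end Rot

end PosaAux

open PosaAux SimpleGraph Walk in
theorem stmt3 {V : Type*} [Fintype V] [DecidableEq V] (G : SimpleGraph V)
    [DecidableRel G.Adj] (n R : ℕ) (hn : Fintype.card V = n)
    (hconn : G.Connected) (hham : ¬ G.IsHamiltonian)
    (hexp : ∀ A : Finset V, A.card ≤ R →
      2 * A.card ≤ ((Finset.univ \ A).filter (fun v => ∃ u ∈ A, G.Adj u v)).card) :
    ((R : ℝ) ^ 2) / 2 ≤ ({s : Sym2 V | IsBooster G s}.ncard : ℝ) := by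
  classical
  rcases Nat.eq_zero_or_pos R with rfl | hR
  · norm_num
  have hV : Nonempty V := hconn.nonempty
  obtain ⟨v0, w0, p0, hp0, hl0⟩ := PosaAux.exists_maxPath G
  have hmax : ∀ {u' v' : V} (r : G.Walk u' v'), r.IsPath → r.length ≤ p0.length := by
    intro u' v' r hr
    rw [hl0]
    exact PosaAux.length_le_maxPathLength G r hr
  have h2 : 2 ≤ p0.length := by
    have h1 := hexp {v0} (by rw [Finset.card_singleton]; exact hR)
    rw [Finset.card_singleton, mul_one] at h1
    have hsub : (Finset.univ \ {v0}).filter (fun z => ∃ u ∈ ({v0} : Finset V), G.Adj u z)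
        ⊆ p0.support.toFinset \ {v0} := by
      intro z hz
      rw [Finset.mem_filter, Finset.mem_sdiff] at hz
      obtain ⟨⟨-, hz0⟩, u, hu, hadj⟩ := hz
      rw [Finset.mem_singleton] at hu
      subst hu
      rw [Finset.mem_sdiff, List.mem_toFinset]
      refine ⟨?_, hz0⟩
      by_contra hzs
      have hcp : (p0.reverse.concat hadj).IsPath := by
        rw [Walk.isPath_def, Walk.support_concat, List.nodup_append']
        refine ⟨hp0.reverse.support_nodup, List.nodup_singleton z, ?_⟩
        intro a ha hb
        rw [List.mem_singleton] at hb
        subst hb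
        rw [Walk.support_reverse, List.mem_reverse] at ha
        exact hzs ha
      have hml := hmax _ hcp
      rw [Walk.length_concat, Walk.length_reverse] at hml
      omega
    have hcard := h1.trans (Finset.card_le_card hsub)
    have hv0 : v0 ∈ p0.support.toFinset := by simpa using p0.start_mem_support
    have hsd : (p0.support.toFinset \ {v0}).card = p0.support.toFinset.card - 1 := by
      rw [Finset.sdiff_singleton_eq_erase, Finset.card_erase_of_mem hv0]
    have hlen : p0.support.toFinset.card = p0.length + 1 := by
      rw [List.toFinset_card_of_nodup hp0.support_nodup, Walk.length_support]
    omega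
  set U : Finset V := (Set.toFinite (rotSet p0)).toFinset with hUdef
  have hUmem : ∀ u, u ∈ U ↔ ∃ q : G.Walk v0 u, IsRot p0 q :=
    fun u => Set.Finite.mem_toFinset _
  have hUcard : R < U.card := rotSet_card_gt R hexp hp0 hmax
  set Tf : V → Finset V := (fun u =>
    if h : ∃ q : G.Walk v0 u, IsRot p0 q then
      (Set.toFinite (rotSet (h.choose.reverse))).toFinset else ∅) with hTf
  have hTspec : ∀ u ∈ U, ∀ w ∈ Tf u, ∃ r : G.Walk u w, r.IsPath ∧ r.length = p0.length := by
    intro u hu w hw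
    have h := (hUmem u).mp hu
    simp only [hTf] at hw
    rw [dif_pos h] at hw
    obtain ⟨r, hr⟩ := (Set.Finite.mem_toFinset _).mp hw
    have hq := h.choose_spec
    refine ⟨r, isRot_isPath (isRot_isPath hp0 hq).reverse hr, ?_⟩
    rw [isRot_length hr, Walk.length_reverse, isRot_length hq]
  have hTcard : ∀ u ∈ U, R < (Tf u).card := by
    intro u hu
    have h := (hUmem u).mp hu
    have hq := h.choose_spec
    have hrev : h.choose.reverse.IsPath := (isRot_isPath hp0 hq).reverse
    have hmax' : ∀ {u' v' : V} (r : G.Walk u' v'), r.IsPath →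
        r.length ≤ h.choose.reverse.length := by
      intro u' v' r hr
      rw [Walk.length_reverse, isRot_length hq]
      exact hmax r hr
    have hgt := rotSet_card_gt R hexp hrev hmax'
    simp only [hTf]
    rw [dif_pos h]
    exact hgt
  have hTne : ∀ u ∈ U, ∀ w ∈ Tf u, w ≠ u := by
    intro u hu w hw hwu
    obtain ⟨r, hrp, hrl⟩ := hTspec u hu w hw
    have h0 : r.length = 0 := by
      subst hwu
      exact loop_length_zero hrp
    omega
  set F : Finset (Sym2 V) := U.biUnion (fun u => (Tf u).image (fun w => s(u, w))) with hF
  have hFbooster : ∀ s ∈ F, IsBooster G s := by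
    intro s hs
    rw [hF, Finset.mem_biUnion] at hs
    obtain ⟨u, hu, hs⟩ := hs
    rw [Finset.mem_image] at hs
    obtain ⟨w, hw, rfl⟩ := hs
    obtain ⟨r, hrp, hrl⟩ := hTspec u hu w hw
    exact isBooster_of_maxPath hconn hham r hrp (by rw [hrl, hl0]) (by omega)
  have himg : ∀ u ∈ U, R + 1 ≤ ((Tf u).image (fun w => s(u, w))).card := by
    intro u hu
    rw [Finset.card_image_of_injOn]
    · exact hTcard u hu
    · intro w hw w' hw' he
      rw [Sym2.eq_iff] at he
      rcases he with ⟨-, h⟩ | ⟨h1, h2'⟩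
      · exact h
      · exact h2'.trans h1
  have hsum : (R + 1) * (R + 1) ≤ ∑ u ∈ U, ((Tf u).image (fun w => s(u, w))).card := by
    calc (R + 1) * (R + 1) ≤ U.card * (R + 1) := Nat.mul_le_mul_right _ hUcard
      _ ≤ ∑ u ∈ U, ((Tf u).image (fun w => s(u, w))).card := by
        have hcs := Finset.card_nsmul_le_sum U
          (fun u => ((Tf u).image (fun w => s(u, w))).card) (R + 1) himg
        simpa [smul_eq_mul] using hcs
  have hdouble : ∑ u ∈ U, ((Tf u).image (fun w => s(u, w))).card ≤ 2 * F.card := by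
    have h1 : ∀ u ∈ U, ((Tf u).image (fun w => s(u, w))) ⊆ F := by
      intro u hu
      rw [hF]
      exact Finset.subset_biUnion_of_mem (fun u => (Tf u).image (fun w => s(u, w))) hu
    calc ∑ u ∈ U, ((Tf u).image (fun w => s(u, w))).card
        = ∑ u ∈ U, (F.filter (fun s => s ∈ (Tf u).image (fun w => s(u, w)))).card := by
          refine Finset.sum_congr rfl fun u hu => ?_
          rw [Finset.filter_mem_eq_inter, Finset.inter_eq_right.mpr (h1 u hu)]
      _ = ∑ s ∈ F, (U.filter (fun u => s ∈ (Tf u).image (fun w => s(u, w)))).card := by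
          simp only [Finset.card_filter]
          exact Finset.sum_comm
      _ ≤ ∑ _s ∈ F, 2 := by
          refine Finset.sum_le_sum fun s _ => ?_
          induction s using Sym2.ind with
          | _ c d =>
            have hsub2 : U.filter (fun u => s(c, d) ∈ (Tf u).image (fun w => s(u, w)))
                ⊆ {c, d} := by
              intro u hu
              rw [Finset.mem_filter, Finset.mem_image] at hu
              obtain ⟨-, w, -, he⟩ := hu
              rw [Sym2.eq_iff] at he
              rcases he with ⟨h, -⟩ | ⟨h, -⟩
              · rw [Finset.mem_insert]
                exact Or.inl h
              · rw [Finset.mem_insert, Finset.mem_singleton]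
                exact Or.inr h
            exact (Finset.card_le_card hsub2).trans
              ((Finset.card_insert_le _ _).trans (by simp))
      _ = 2 * F.card := by rw [Finset.sum_const, smul_eq_mul, mul_comm]
  have hle2 : (F.card : ℝ) ≤ (({s : Sym2 V | IsBooster G s}).ncard : ℝ) := by
    have hsubF : ↑F ⊆ {s : Sym2 V | IsBooster G s} := fun s hs => hFbooster s hs
    have hn2 := Set.ncard_le_ncard hsubF (Set.toFinite _)
    rw [Set.ncard_coe_finset] at hn2
    exact_mod_cast hn2
  have hfin2 : (R + 1) * (R + 1) ≤ 2 * F.card := hsum.trans hdouble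
  have hcast : ((R : ℝ) + 1) * ((R : ℝ) + 1) ≤ 2 * (F.card : ℝ) := by exact_mod_cast hfin2
  have hRnn : (0 : ℝ) ≤ (R : ℝ) := Nat.cast_nonneg _
  nlinarith [hle2, hcast, hRnn]
end

section
/- Let k ≥ 1, let M be a graph whose vertex set is partitioned as V = V₁ ∪ ... ∪ V_s with s ≥ 1, and suppose: (a) the induced subgraph M[V_i] is k-vertex-connected for every i ∈ [s], and (b) for every i ∈ [s−1], M contains a matching of size k between V_i and V_s. Then M is k-vertex-connected. -/
/-- A graph is `k`-vertex-connected if it has more than `k` vertices and removing any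
set of at most `k - 1` vertices leaves a connected graph. -/
def IsKConnected {V : Type*} [Fintype V] (G : SimpleGraph V) (k : ℕ) : Prop :=
  k < Fintype.card V ∧
    ∀ K : Finset V, K.card < k → (G.induce ((↑K : Set V)ᶜ)).Connected

lemma reach_in_part {V : Type*} [Fintype V] [DecidableEq V] (M : SimpleGraph V) (k : ℕ)
    (A : Finset V) (hA : IsKConnected (M.induce (↑A : Set V)) k)
    (K : Finset V) (hK : K.card < k) {x y : V} (hx : x ∈ A) (hy : y ∈ A)
    (hxK : x ∉ K) (hyK : y ∉ K) :
    (M.induce ((↑K : Set V)ᶜ)).Reachable ⟨x, by simpa using hxK⟩ ⟨y, by simpa using hyK⟩ := by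
  classical
  set K' : Finset ↥(↑A : Set V) := Finset.univ.filter (fun v => (v : V) ∈ K) with hK'
  have hcard : K'.card < k := by
    refine lt_of_le_of_lt ?_ hK
    refine Finset.card_le_card_of_injOn (fun v => (v : V)) ?_ ?_
    · intro a ha; simp [hK'] at ha; exact ha
    · intro a _ b _ h; exact Subtype.ext h
  have hc := hA.2 K' hcard
  have hx' : (⟨x, by simpa using hx⟩ : ↥(↑A : Set V)) ∈ ((↑K' : Set ↥(↑A : Set V))ᶜ) := by
    simp [hK', hxK]
  have hy' : (⟨y, by simpa using hy⟩ : ↥(↑A : Set V)) ∈ ((↑K' : Set ↥(↑A : Set V))ᶜ) := by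
    simp [hK', hyK]
  have hreach := hc.preconnected ⟨_, hx'⟩ ⟨_, hy'⟩
  let f : ((M.induce (↑A : Set V)).induce ((↑K' : Set ↥(↑A : Set V))ᶜ)) →g
      (M.induce ((↑K : Set V)ᶜ)) :=
    ⟨fun a => ⟨(a.1 : V), by
        have h2 := a.2
        simp [hK'] at h2
        simpa using h2⟩,
     fun hab => hab⟩
  exact hreach.map f

theorem stmt7 {V : Type*} [Fintype V] [DecidableEq V] (M : SimpleGraph V)
    (k s : ℕ) (hk : 1 ≤ k) (hs : 1 ≤ s) (U : Fin s → Finset V)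
    (hdisj : ∀ i j : Fin s, i ≠ j → Disjoint (U i) (U j))
    (hne : ∀ i : Fin s, (U i).Nonempty)
    (hunion : Finset.univ.biUnion U = Finset.univ)
    (hconn : ∀ i : Fin s, IsKConnected (M.induce (↑(U i) : Set V)) k)
    (hmatch : ∀ i : Fin s, (i : ℕ) < s - 1 →
      ∃ e : Fin k → V × V,
        (∀ j : Fin k, (e j).1 ∈ U i ∧ (e j).2 ∈ U ⟨s - 1, by omega⟩ ∧
          M.Adj (e j).1 (e j).2) ∧
        (∀ j j' : Fin k, j ≠ j' →
          (e j).1 ≠ (e j').1 ∧ (e j).1 ≠ (e j').2 ∧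
          (e j).2 ≠ (e j').1 ∧ (e j).2 ≠ (e j').2)) :
    IsKConnected M k := by
  classical
  set L : Fin s := ⟨s - 1, by omega⟩ with hLdef
  have hUL : k < (U L).card := by
    have := (hconn L).1
    simpa using this
  constructor
  · have h2 : (U L).card ≤ Fintype.card V := Finset.card_le_univ _
    omega
  intro K hK
  -- a base vertex in U L outside K
  have hwe : (U L \ K).Nonempty := by
    rw [← Finset.card_pos]
    have := Finset.le_card_sdiff K (U L)
    omega
  obtain ⟨w0, hw0⟩ := hwe
  rw [Finset.mem_sdiff] at hw0
  -- every surviving vertex reaches w0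
  have key : ∀ (v : V) (hv : v ∉ K),
      (M.induce ((↑K : Set V)ᶜ)).Reachable ⟨v, by simpa using hv⟩ ⟨w0, by simpa using hw0.2⟩ := by
    intro v hv
    have hvU : ∃ i : Fin s, v ∈ U i := by
      have : v ∈ Finset.univ.biUnion U := by rw [hunion]; exact Finset.mem_univ v
      simpa [Finset.mem_biUnion] using this
    obtain ⟨i, hvUi⟩ := hvU
    by_cases hiL : i = L
    · rw [hiL] at hvUi
      exact reach_in_part M k (U L) (hconn L) K hK hvUi hw0.1 hv hw0.2
    · have hilt : (i : ℕ) < s - 1 := by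
        have h1 : (i : ℕ) < s := i.2
        have h2 : (i : ℕ) ≠ s - 1 := fun h => hiL (Fin.ext h)
        omega
      obtain ⟨e, he1, he2⟩ := hmatch i hilt
      have hgood : ∃ j : Fin k, (e j).1 ∉ K ∧ (e j).2 ∉ K := by
        by_contra hbad
        push_neg at hbad
        set g : Fin k → V := fun j => if (e j).1 ∈ K then (e j).1 else (e j).2 with hg
        have hgK : ∀ j, g j ∈ K := by
          intro j
          by_cases h : (e j).1 ∈ K
          · simp [hg, h]
          · simp [hg, h, hbad j h]
        have hcard : (Finset.univ : Finset (Fin k)).card ≤ K.card := by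
          apply Finset.card_le_card_of_injOn g (fun j _ => hgK j)
          intro a _ b _ hab
          by_contra hne'
          obtain ⟨h1, h2, h3, h4⟩ := he2 a b hne'
          simp only [hg] at hab
          split_ifs at hab <;> [exact h1 hab; exact h2 hab; exact h3 hab; exact h4 hab]
        simp at hcard
        omega
      obtain ⟨j, hj1, hj2⟩ := hgood
      obtain ⟨hm1, hm2, hm3⟩ := he1 j
      have r1 := reach_in_part M k (U i) (hconn i) K hK hvUi hm1 hv hj1
      have r2 : (M.induce ((↑K : Set V)ᶜ)).Reachable ⟨(e j).1, by simpa using hj1⟩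
          ⟨(e j).2, by simpa using hj2⟩ := SimpleGraph.Adj.reachable hm3
      have r3 := reach_in_part M k (U L) (hconn L) K hK hm2 hw0.1 hj2 hw0.2
      exact (r1.trans r2).trans r3
  haveI : Nonempty ↥((↑K : Set V)ᶜ) := ⟨⟨w0, by simpa using hw0.2⟩⟩
  rw [SimpleGraph.connected_iff]
  refine ⟨fun a b => ?_, ‹_›⟩
  have ha : (a : V) ∉ K := by
    have h := a.2; simp only [Set.mem_compl_iff, Finset.mem_coe] at h; exact h
  have hb : (b : V) ∉ K := by
    have h := b.2; simp only [Set.mem_compl_iff, Finset.mem_coe] at h; exact h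
  exact (key a ha).trans (key b hb).symm
end

section
/- Let 0 < ε ≤ 1/5 and let G be a graph on n vertices such that (i) |N_G(A)| ≥ 2|A| for every set A with |A| ≤ εn, and (ii) there is at least one edge between any two disjoint vertex sets of size exactly ⌈εn⌉. Then G is connected and |N_G(A)| ≥ 2|A| for every set A with |A| ≤ n/5. -/
theorem stmt9 {V : Type*} [Fintype V] [DecidableEq V] (G : SimpleGraph V)
    [DecidableRel G.Adj] (n : ℕ) (hn : Fintype.card V = n) (ε : ℝ)
    (hε0 : 0 < ε) (hε : ε ≤ 1 / 5)
    (hexp : ∀ A : Finset V, (A.card : ℝ) ≤ ε * n →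
      2 * A.card ≤ ((Finset.univ \ A).filter (fun v => ∃ u ∈ A, G.Adj u v)).card)
    (hedge : ∀ A B : Finset V, Disjoint A B → A.card = ⌈ε * n⌉₊ → B.card = ⌈ε * n⌉₊ →
      ∃ u ∈ A, ∃ w ∈ B, G.Adj u w) :
    G.Connected ∧
      ∀ A : Finset V, (A.card : ℝ) ≤ (n : ℝ) / 5 →
        2 * A.card ≤ ((Finset.univ \ A).filter (fun v => ∃ u ∈ A, G.Adj u v)).card := by
  classical
  set m := ⌈ε * n⌉₊ with hm
  -- n > 0
  have hn0 : 0 < n := by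
    by_contra h
    have hn0 : n = 0 := Nat.le_zero.mp (not_lt.mp h)
    have hm0 : m = 0 := by simp [hm, hn0]
    obtain ⟨u, hu, -⟩ := hedge ∅ ∅ (by simp) (by simp [hm0]) (by simp [hm0])
    simp at hu
  have hnR : (0:ℝ) < n := by exact_mod_cast hn0
  have hεn5 : ε * n ≤ (n:ℝ) / 5 := by nlinarith
  -- the expansion claim
  have hexp' : ∀ A : Finset V, (A.card : ℝ) ≤ (n : ℝ) / 5 →
      2 * A.card ≤ ((Finset.univ \ A).filter (fun v => ∃ u ∈ A, G.Adj u v)).card := by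
    intro A hA
    by_cases hsm : (A.card : ℝ) ≤ ε * n
    · exact hexp A hsm
    push_neg at hsm
    set T := (Finset.univ \ A).filter (fun v => ∃ u ∈ A, G.Adj u v) with hT
    set S := (Finset.univ \ A).filter (fun v => ¬ ∃ u ∈ A, G.Adj u v) with hS
    have hpart : T.card + S.card = (Finset.univ \ A).card :=
      Finset.card_filter_add_card_filter_not _
    have hAcard : A.card ≤ n := by rw [← hn]; exact Finset.card_le_univ A
    have hsd : (Finset.univ \ A).card = n - A.card := by
      rw [Finset.card_univ_diff, hn]
    -- |S| < m
    have hScard : S.card < m := by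
      by_contra hc
      push_neg at hc
      have hmA : m ≤ A.card := by
        rw [hm, Nat.ceil_le]; exact le_of_lt hsm
      obtain ⟨B, hBS, hBcard⟩ := Finset.exists_subset_card_eq hc
      obtain ⟨A', hA'A, hA'card⟩ := Finset.exists_subset_card_eq hmA
      have hdisj : Disjoint A' B := by
        rw [Finset.disjoint_left]
        intro x hxA' hxB
        have := hBS hxB
        rw [hS, Finset.mem_filter, Finset.mem_sdiff] at this
        exact this.1.2 (hA'A hxA')
      obtain ⟨u, hu, w, hw, hadj⟩ := hedge A' B hdisj hA'card hBcard
      have hwS := hBS hw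
      rw [hS, Finset.mem_filter] at hwS
      exact hwS.2 ⟨u, hA'A hu, hadj⟩
    -- real bounds
    have hSle : (S.card : ℝ) < ε * n := by
      have h1 : (S.card : ℝ) ≤ (m : ℝ) - 1 := by
        have : S.card + 1 ≤ m := hScard
        have := (Nat.cast_le (α := ℝ)).mpr this
        push_cast at this; linarith
      have h2 : (m : ℝ) < ε * n + 1 := by
        rw [hm]
        exact Nat.ceil_lt_add_one (by positivity)
      linarith
    have hTcard : (T.card : ℝ) = n - A.card - S.card := by
      have : (T.card : ℝ) + S.card = (n : ℝ) - A.card := by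
        rw [← Nat.cast_add, hpart, hsd, Nat.cast_sub hAcard]
      linarith
    have : (2 * A.card : ℝ) ≤ (T.card : ℝ) := by
      rw [hTcard]; linarith
    exact_mod_cast this
  refine ⟨?_, hexp'⟩
  -- connectivity
  have hcomp : ∀ u : V, (n : ℝ) / 5 < ((Finset.univ.filter (fun w => G.Reachable u w)).card : ℝ) := by
    intro u
    set C := Finset.univ.filter (fun w => G.Reachable u w) with hC
    have hu : u ∈ C := by
      simp only [hC, Finset.mem_filter, Finset.mem_univ, true_and]
      exact SimpleGraph.Reachable.refl u
    by_contra h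
    push_neg at h
    have hclosed : (Finset.univ \ C).filter (fun v => ∃ w ∈ C, G.Adj w v) = ∅ := by
      rw [Finset.eq_empty_iff_forall_notMem]
      intro v hv
      rw [Finset.mem_filter, Finset.mem_sdiff] at hv
      obtain ⟨⟨-, hvC⟩, w, hw, hadj⟩ := hv
      apply hvC
      have hw' : G.Reachable u w := (Finset.mem_filter.mp hw).2
      exact Finset.mem_filter.mpr ⟨Finset.mem_univ v, hw'.trans hadj.reachable⟩
    have := hexp' C h
    rw [hclosed, Finset.card_empty] at this
    have hC0 : C.card = 0 := by omega
    rw [Finset.card_eq_zero] at hC0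
    rw [hC0] at hu
    exact Finset.notMem_empty u hu
  rw [SimpleGraph.connected_iff]
  constructor
  swap
  · rw [← Fintype.card_pos_iff, hn]; exact hn0
  · intro u v
    by_contra huv
    set Cu := Finset.univ.filter (fun w => G.Reachable u w) with hCu
    set Cv := Finset.univ.filter (fun w => G.Reachable v w) with hCv
    have hdisj : Disjoint Cu Cv := by
      rw [Finset.disjoint_left]
      intro x hxu hxv
      simp only [hCu, hCv, Finset.mem_filter, Finset.mem_univ, true_and] at hxu hxv
      exact huv (hxu.trans hxv.symm)
    have hmu : m ≤ Cu.card := by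
      rw [hm, Nat.ceil_le]
      have := hcomp u
      linarith [hεn5]
    have hmv : m ≤ Cv.card := by
      rw [hm, Nat.ceil_le]
      have := hcomp v
      linarith [hεn5]
    obtain ⟨A', hA'⟩ := Finset.exists_subset_card_eq hmu
    obtain ⟨B', hB'⟩ := Finset.exists_subset_card_eq hmv
    obtain ⟨a, ha, b, hb, hadj⟩ := hedge A' B'
      (hdisj.mono hA'.1 hB'.1) hA'.2 hB'.2
    have hau : G.Reachable u a := by
      have := hA'.1 ha
      simpa [hCu] using this
    have hbv : G.Reachable v b := by
      have := hB'.1 hb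
      simpa [hCv] using this
    exact huv ((hau.trans hadj.reachable).trans hbv.symm)
end
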